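/- Let m ≡ 0 (mod 4), let l and l̃ be even natural numbers with m ≤ l and m ≤ l̃, let N ≥ 1 be a natural number, and let k ≥ 6. If l̃ ≡ l (mod 2^N), then σ_{l̃}^m(k) ≡ σ_l^m(k) (mod 2^{N+1}). -/

import Mathlib

/-- The coefficient `σ_l^m(k)` of the Holt–Ille polynomial `H_l^m`. -/
def sigmaLM (l m k : ℕ) : ℚ :=
  if (l + m) % 2 = 0 then
    (-2 : ℚ) ^ k * (((l - m) / 2).choose k : ℚ) * (((l + m) / 2).choose k : ℚ) /
      (((2 * k).choose k : ℚ))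
  else
    (-2 : ℚ) ^ k * (((l - m) / 2).choose k : ℚ) * (((l + m) / 2).choose k : ℚ) /
      ((((2 * k).choose k : ℚ)) * (2 * (k : ℚ) + 1))

/-- The value `H_l^m(−2) = Σ_{k=0}^{⌊(l−m)/2⌋} σ_l^m(k)`. -/
def HLM (l m : ℕ) : ℚ := ∑ k ∈ Finset.range ((l - m) / 2 + 1), sigmaLM l m k

/-- `a ≡ b (mod 2^N)` for rationals (with odd denominators), expressed via the 2-adic
norm on `ℚ₂`: it means `‖a − b‖₂ ≤ 2^(−N)`. -/
def Cong2 (a b : ℚ) (N : ℕ) : Prop :=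
  ‖((a - b : ℚ) : ℚ_[2])‖ ≤ (2 : ℝ) ^ (-(N : ℤ))

private lemma four_mul_le_two_pow : ∀ w : ℕ, 4 * w ≤ 2 ^ w + 4 := by
  intro w
  induction w with
  | zero => norm_num
  | succ n ih =>
    rcases Nat.lt_or_ge n 2 with h | h
    · interval_cases n <;> norm_num
    · have h4 : 4 ≤ 2 ^ n := by
        calc (4:ℕ) = 2 ^ 2 := rfl
        _ ≤ 2 ^ n := Nat.pow_le_pow_right (by norm_num) h
      rw [pow_succ]; omega

private lemma norm_natCast_padic (n : ℕ) (hn : n ≠ 0) :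
    ‖((n : ℚ_[2]))‖ = (2:ℝ) ^ (-(padicValNat 2 n : ℤ)) := by
  rw [Padic.norm_eq_zpow_neg_valuation (by exact_mod_cast hn), Padic.valuation_natCast]
  norm_num

private lemma norm_natCast_le_one (n : ℕ) : ‖((n : ℚ_[2]))‖ ≤ 1 := by
  have := Padic.norm_int_le_one (p := 2) (n : ℤ)
  simpa using this

private lemma norm_sum_le_padic {ι : Type*} (s : Finset ι) (f : ι → ℚ_[2]) (t : ℝ)
    (ht : 0 ≤ t) (h : ∀ i ∈ s, ‖f i‖ ≤ t) : ‖∑ i ∈ s, f i‖ ≤ t := by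
  classical
  induction s using Finset.cons_induction with
  | empty => simpa using ht
  | cons a s ha ih =>
    rw [Finset.sum_cons]
    exact le_trans (Padic.nonarchimedean _ _)
      (max_le (h _ (Finset.mem_cons_self _ _)) (ih fun i hi => h i (Finset.mem_cons_of_mem hi)))

private lemma half_add_quarter_le_val_factorial (k : ℕ) (hk : 6 ≤ k) :
    k / 2 + k / 4 ≤ padicValNat 2 (Nat.factorial k) := by
  rw [padicValNat_factorial (b := Nat.log 2 k + 3) (by omega)]
  calc k/2 + k/4 = ∑ i ∈ ({1,2} : Finset ℕ), k / 2^i := by norm_num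
    _ ≤ _ := Finset.sum_le_sum_of_subset (by intro x hx; simp at hx; simp; omega)

private lemma choose_norm_bound (c j k N : ℕ) (hj1 : 1 ≤ j) (hjk : j ≤ k) (hk : 6 ≤ k)
    (hc : 2 ^ (N - 1) ∣ c) (hN : 1 ≤ N) :
    ‖((c.choose j : ℚ_[2]))‖ ≤ (2:ℝ) ^ ((padicValNat 2 (Nat.factorial k) : ℤ) - (N + 1)) := by
  set vk := padicValNat 2 (Nat.factorial k) with hvk
  by_cases h0 : c.choose j = 0
  · rw [h0]; push_cast; rw [norm_zero]; positivity
  · have hcj : j ≤ c := by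
      by_contra hlt
      exact h0 (Nat.choose_eq_zero_of_lt (by omega))
    have hc0 : c ≠ 0 := by omega
    have h1 : c - 1 + 1 = c := by omega
    have h2 : j - 1 + 1 = j := by omega
    have hid : c * Nat.choose (c-1) (j-1) = Nat.choose c j * j := by
      have := Nat.add_one_mul_choose_eq (c-1) (j-1)
      rwa [h1, h2] at this
    have hch0 : Nat.choose (c-1) (j-1) ≠ 0 := (Nat.choose_pos (by omega)).ne'
    have hval : padicValNat 2 c + padicValNat 2 ((c-1).choose (j-1))
        = padicValNat 2 (c.choose j) + padicValNat 2 j := by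
      rw [← padicValNat.mul hc0 hch0, ← padicValNat.mul h0 (by omega), hid]
    have hNc : N - 1 ≤ padicValNat 2 c := (padicValNat_dvd_iff_le hc0).mp hc
    have hD : padicValNat 2 j + 2 ≤ vk := by
      have hw : 2 ^ padicValNat 2 j ∣ j := pow_padicValNat_dvd
      have hle : 2 ^ padicValNat 2 j ≤ j := Nat.le_of_dvd (by omega) hw
      have h4 := four_mul_le_two_pow (padicValNat 2 j)
      have hE := half_add_quarter_le_val_factorial k hk
      omega
    rw [norm_natCast_padic _ h0]
    apply zpow_le_zpow_right₀ (by norm_num : (1:ℝ) ≤ 2)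
    omega

private lemma sigmaLM_cong_aux (m l lt N k : ℕ) (hm : m % 4 = 0) (hl : Even l) (hlt : Even lt)
    (hml : m ≤ l) (hmlt : m ≤ lt) (hN : 1 ≤ N) (hk : 6 ≤ k) (hle : l ≤ lt)
    (hdvd : 2 ^ N ∣ lt - l) :
    Cong2 (sigmaLM lt m k) (sigmaLM l m k) (N + 1) := by
  obtain ⟨p, hp⟩ := hl
  obtain ⟨q, hq⟩ := hlt
  have hm4 : m = 4 * (m / 4) := by omega
  set a := (l - m) / 2 with ha
  set b := (l + m) / 2 with hb
  set c := (lt - l) / 2 with hc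
  have hmod_l : (l + m) % 2 = 0 := by omega
  have hmod_lt : (lt + m) % 2 = 0 := by omega
  have hat : (lt - m) / 2 = a + c := by omega
  have hbt : (lt + m) / 2 = b + c := by omega
  -- divisibility of c
  have hcdvd : 2 ^ (N - 1) ∣ c := by
    obtain ⟨t, ht⟩ := hdvd
    have h2 : 2 ^ N = 2 * 2 ^ (N - 1) := by
      conv_lhs => rw [show N = (N - 1) + 1 by omega]
      ring
    rw [h2, mul_assoc] at ht
    exact ⟨t, by omega⟩
  rw [Cong2, sigmaLM, sigmaLM, if_pos hmod_lt, if_pos hmod_l, hat, hbt]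
  -- Vandermonde
  have hvan : ∀ x : ℕ, (x + c).choose k
      = x.choose k + ∑ i ∈ Finset.range k, x.choose i * c.choose (k - i) := by
    intro x
    rw [Nat.add_choose_eq, Finset.Nat.sum_antidiagonal_eq_sum_range_succ_mk,
      Finset.sum_range_succ]
    simp [Nat.add_comm]
  set Ea := ∑ i ∈ Finset.range k, a.choose i * c.choose (k - i) with hEa
  set Eb := ∑ i ∈ Finset.range k, b.choose i * c.choose (k - i) with hEb
  set C2 := (2 * k).choose k with hC2def
  have hC2 : C2 ≠ 0 := (Nat.choose_pos (by omega)).ne'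
  -- valuation of the central binomial coefficient
  set vk := padicValNat 2 (Nat.factorial k) with hvk
  have hfac : C2 * Nat.factorial k * Nat.factorial k = Nat.factorial (2 * k) := by
    have := Nat.choose_mul_factorial_mul_factorial (show k ≤ 2 * k by omega)
    simpa [show 2 * k - k = k by omega] using this
  have hvalfac : padicValNat 2 C2 + vk + vk = vk + k := by
    have hne : Nat.factorial k ≠ 0 := Nat.factorial_ne_zero k
    have h := congrArg (padicValNat 2) hfac
    rwa [padicValNat.mul (by positivity) hne, padicValNat.mul hC2 hne,
      padicValNat_factorial_mul] at h
  have hvk_le : vk ≤ k := by omega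
  have hC2val : padicValNat 2 C2 = k - vk := by omega
  -- the rational identity
  have hA' : ((a + c).choose k : ℚ) = a.choose k + Ea := by exact_mod_cast hvan a
  have hB' : ((b + c).choose k : ℚ) = b.choose k + Eb := by exact_mod_cast hvan b
  have hdiff : ((-2:ℚ) ^ k * ((a+c).choose k : ℚ) * ((b+c).choose k : ℚ) / (C2 : ℚ)
      - (-2:ℚ) ^ k * (a.choose k : ℚ) * (b.choose k : ℚ) / (C2 : ℚ))
      = (-2:ℚ) ^ k * ((Ea : ℚ) * ((b+c).choose k : ℚ) + (a.choose k : ℚ) * Eb) / (C2 : ℚ) := by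
    rw [div_sub_div_same]
    congr 1
    rw [hA', hB']
    ring
  rw [hdiff]
  push_cast
  rw [norm_div, norm_mul, norm_pow]
  have hn2 : ‖(-2 : ℚ_[2])‖ = 2⁻¹ := by
    rw [norm_neg]
    have := @Padic.norm_p 2 ⟨Nat.prime_two⟩
    simpa using this
  -- bound on the error sums
  have hterm : ∀ x : ℕ, ‖((∑ i ∈ Finset.range k, x.choose i * c.choose (k - i) : ℕ) : ℚ_[2])‖
      ≤ (2:ℝ) ^ ((vk : ℤ) - (N + 1)) := by
    intro x
    push_cast
    apply norm_sum_le_padic _ _ _ (by positivity)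
    intro i hi
    have hik : i < k := Finset.mem_range.mp hi
    calc ‖((x.choose i : ℚ_[2])) * ((c.choose (k - i) : ℚ_[2]))‖
        = ‖((x.choose i : ℚ_[2]))‖ * ‖((c.choose (k - i) : ℚ_[2]))‖ := norm_mul _ _
      _ ≤ 1 * ((2:ℝ) ^ ((vk : ℤ) - (N + 1))) := by
          apply mul_le_mul (norm_natCast_le_one _) ?_ (norm_nonneg _) zero_le_one
          exact choose_norm_bound c (k - i) k N (by omega) (by omega) hk hcdvd hN
      _ = (2:ℝ) ^ ((vk : ℤ) - (N + 1)) := one_mul _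
  have hmid : ‖((Ea : ℚ_[2])) * (((b+c).choose k : ℚ_[2])) + ((a.choose k : ℚ_[2])) * ((Eb : ℚ_[2]))‖
      ≤ (2:ℝ) ^ ((vk : ℤ) - (N + 1)) := by
    refine le_trans (Padic.nonarchimedean _ _) (max_le ?_ ?_)
    · calc ‖((Ea : ℚ_[2])) * (((b+c).choose k : ℚ_[2]))‖
          = ‖((Ea : ℚ_[2]))‖ * ‖(((b+c).choose k : ℚ_[2]))‖ := norm_mul _ _
        _ ≤ ((2:ℝ) ^ ((vk : ℤ) - (N + 1))) * 1 := by
            apply mul_le_mul (hterm a) (norm_natCast_le_one _) (norm_nonneg _) (by positivity)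
        _ = _ := mul_one _
    · calc ‖((a.choose k : ℚ_[2])) * ((Eb : ℚ_[2]))‖
          = ‖((a.choose k : ℚ_[2]))‖ * ‖((Eb : ℚ_[2]))‖ := norm_mul _ _
        _ ≤ 1 * ((2:ℝ) ^ ((vk : ℤ) - (N + 1))) := by
            apply mul_le_mul (norm_natCast_le_one _) (hterm b) (norm_nonneg _) zero_le_one
        _ = _ := one_mul _
  have hC2norm : ‖((C2 : ℚ_[2]))‖ = (2:ℝ) ^ (-((k - vk : ℕ) : ℤ)) := by
    rw [norm_natCast_padic _ hC2, hC2val]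
  calc ‖(-2 : ℚ_[2])‖ ^ k * ‖(Ea : ℚ_[2]) * (((b+c).choose k : ℚ_[2])) + ((a.choose k : ℚ_[2])) * (Eb : ℚ_[2])‖ / ‖((C2 : ℚ_[2]))‖
      ≤ ((2:ℝ)⁻¹) ^ k * ((2:ℝ) ^ ((vk : ℤ) - (N + 1))) / ((2:ℝ) ^ (-((k - vk : ℕ) : ℤ))) := by
        rw [hn2, hC2norm]
        gcongr
    _ = (2:ℝ) ^ (-((N:ℤ) + 1)) := by
        rw [show ((2:ℝ)⁻¹) ^ k = (2:ℝ) ^ (-(k:ℤ)) by rw [zpow_neg, zpow_natCast, inv_pow],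
          ← zpow_add₀ (by norm_num : (2:ℝ) ≠ 0), ← zpow_sub₀ (by norm_num : (2:ℝ) ≠ 0)]
        congr 1
        push_cast [Nat.cast_sub hvk_le]
        ring
    _ = (2:ℝ) ^ (-((N + 1 : ℕ) : ℤ)) := by norm_num

theorem sigmaLM_cong (m l lt N k : ℕ) (hm : m % 4 = 0) (hl : Even l) (hlt : Even lt)
    (hml : m ≤ l) (hmlt : m ≤ lt) (hN : 1 ≤ N) (hk : 6 ≤ k)
    (hcong : lt % 2 ^ N = l % 2 ^ N) :
    Cong2 (sigmaLM lt m k) (sigmaLM l m k) (N + 1) := by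
  rcases le_total l lt with hle | hle
  · exact sigmaLM_cong_aux m l lt N k hm hl hlt hml hmlt hN hk hle
      ((Nat.modEq_iff_dvd' hle).mp hcong.symm)
  · have h := sigmaLM_cong_aux m lt l N k hm hlt hl hmlt hml hN hk hle
      ((Nat.modEq_iff_dvd' hle).mp hcong)
    rw [Cong2] at h ⊢
    rw [show ((sigmaLM lt m k - sigmaLM l m k : ℚ) : ℚ_[2])
      = -((sigmaLM l m k - sigmaLM lt m k : ℚ) : ℚ_[2]) by push_cast; ring, norm_neg]
    exact h
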